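/- arXiv:1805.05448 — 2 statements merged into one kernel-verified Lean document; each statement's English description precedes it below -/
import Mathlib

section
/- Let G₁ be a finite weighted complete graph on 2k color-vertices where the weight w(i,j) equals the maximum distance between points of color i and color j in a finite colored planar point set P (every color nonempty). For a threshold t ∈ ℝ, G₁ restricted to edges of weight ≥ t has a perfect matching if and only if P admits a color-spanning matching whose minimum edge length is ≥ t. Consequently the MaxMin color-spanning matching value equals the maximum over thresholds t for which the thresholded graph has a perfect matching. -/
open scoped Classical

noncomputable section

abbrev Pt := EuclideanSpace ℝ (Fin 2)

/-- A color-spanning matching of a `2*k`-colored point set `P`: `k` edges whose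
`2*k` endpoints lie in `P` and have pairwise distinct colors (hence the
endpoints are pairwise distinct and all `2*k` colors are used). -/
structure CSM (k : ℕ) (P : Finset Pt) (color : Pt → Fin (2*k)) where
  e : Fin k → Pt × Pt
  mem1 : ∀ i, (e i).1 ∈ P
  mem2 : ∀ i, (e i).2 ∈ P
  colorInj : Function.Injective
    (fun x : Fin k × Bool => color (if x.2 then (e x.1).1 else (e x.1).2))

def CSM.weight {k : ℕ} {P : Finset Pt} {color : Pt → Fin (2*k)}
    (M : CSM k P color) : ℝ :=
  ∑ i, dist (M.e i).1 (M.e i).2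

def CSM.minEdge {k : ℕ} (hk : 0 < k) {P : Finset Pt} {color : Pt → Fin (2*k)}
    (M : CSM k P color) : ℝ :=
  Finset.univ.inf' ⟨⟨0, hk⟩, Finset.mem_univ _⟩ fun i => dist (M.e i).1 (M.e i).2

def CSM.maxEdge {k : ℕ} (hk : 0 < k) {P : Finset Pt} {color : Pt → Fin (2*k)}
    (M : CSM k P color) : ℝ :=
  Finset.univ.sup' ⟨⟨0, hk⟩, Finset.mem_univ _⟩ fun i => dist (M.e i).1 (M.e i).2

/-- The bichromatic farthest-pair distance between colors `c` and `d`. -/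
def farDist {k : ℕ} (P : Finset Pt) (color : Pt → Fin (2*k)) (c d : Fin (2*k)) : ℝ :=
  sSup {r : ℝ | ∃ p ∈ P, ∃ q ∈ P, color p = c ∧ color q = d ∧ dist p q = r}

/-- The bichromatic closest-pair distance between colors `c` and `d`. -/
def closeDist {k : ℕ} (P : Finset Pt) (color : Pt → Fin (2*k)) (c d : Fin (2*k)) : ℝ :=
  sInf {r : ℝ | ∃ p ∈ P, ∃ q ∈ P, color p = c ∧ color q = d ∧ dist p q = r}

/-- A perfect matching of the `2*k` colors: `k` unordered pairs (encoded as
ordered pairs) whose endpoints enumerate all `2*k` colors without repetition. -/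
def IsColorPM (k : ℕ) (μ : Fin k → Fin (2*k) × Fin (2*k)) : Prop :=
  Function.Injective (fun x : Fin k × Bool =>
    if x.2 then (μ x.1).1 else (μ x.1).2)

lemma farSet_finite {k : ℕ} (P : Finset Pt) (color : Pt → Fin (2*k)) (c d : Fin (2*k)) :
    {r : ℝ | ∃ p ∈ P, ∃ q ∈ P, color p = c ∧ color q = d ∧ dist p q = r}.Finite := by
  apply Set.Finite.subset ((P.finite_toSet.prod P.finite_toSet).image
    (fun pq : Pt × Pt => dist pq.1 pq.2))
  rintro r ⟨p, hp, q, hq, _, _, rfl⟩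
  exact ⟨(p, q), ⟨hp, hq⟩, rfl⟩

lemma le_farDist {k : ℕ} (P : Finset Pt) (color : Pt → Fin (2*k)) {p q : Pt}
    (hp : p ∈ P) (hq : q ∈ P) :
    dist p q ≤ farDist P color (color p) (color q) :=
  le_csSup (farSet_finite P color _ _).bddAbove ⟨p, hp, q, hq, rfl, rfl, rfl⟩

lemma farDist_attained {k : ℕ} (P : Finset Pt) (color : Pt → Fin (2*k))
    (hsurj : ∀ c : Fin (2*k), ∃ p ∈ P, color p = c) (c d : Fin (2*k)) :
    ∃ p ∈ P, ∃ q ∈ P, color p = c ∧ color q = d ∧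
      dist p q = farDist P color c d := by
  obtain ⟨p, hp, hpc⟩ := hsurj c
  obtain ⟨q, hq, hqd⟩ := hsurj d
  have hne : ({r : ℝ | ∃ p ∈ P, ∃ q ∈ P, color p = c ∧ color q = d ∧
      dist p q = r}).Nonempty := ⟨dist p q, p, hp, q, hq, hpc, hqd, rfl⟩
  exact hne.csSup_mem (farSet_finite P color c d)

lemma farDist_nonneg {k : ℕ} (P : Finset Pt) (color : Pt → Fin (2*k))
    (hsurj : ∀ c : Fin (2*k), ∃ p ∈ P, color p = c) (c d : Fin (2*k)) :
    0 ≤ farDist P color c d := by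
  obtain ⟨p, _, q, _, _, _, h⟩ := farDist_attained P color hsurj c d
  rw [← h]; exact dist_nonneg

/-- Threshold characterization of MaxMin: the farthest-pair color graph
restricted to edges of weight `≥ t` has a perfect matching iff `P` has a
color-spanning matching all of whose edges have length `≥ t`; consequently the
MaxMin color-spanning matching value equals the supremum of the thresholds `t`
for which the thresholded color graph has a perfect matching. -/
theorem maxmin_threshold_characterization
    (k : ℕ) (hk : 0 < k) (P : Finset Pt) (color : Pt → Fin (2*k))
    (hsurj : ∀ c : Fin (2*k), ∃ p ∈ P, color p = c) :
    (∀ t : ℝ,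
      (∃ μ : Fin k → Fin (2*k) × Fin (2*k), IsColorPM k μ ∧
          ∀ i, t ≤ farDist P color (μ i).1 (μ i).2) ↔
      (∃ M : CSM k P color, ∀ i, t ≤ dist (M.e i).1 (M.e i).2)) ∧
    sSup {r : ℝ | ∃ M : CSM k P color, r = M.minEdge hk} =
      sSup {t : ℝ | ∃ μ : Fin k → Fin (2*k) × Fin (2*k), IsColorPM k μ ∧
          ∀ i, t ≤ farDist P color (μ i).1 (μ i).2} := by
  -- the main iff
  have hiff : ∀ t : ℝ,
      (∃ μ : Fin k → Fin (2*k) × Fin (2*k), IsColorPM k μ ∧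
          ∀ i, t ≤ farDist P color (μ i).1 (μ i).2) ↔
      (∃ M : CSM k P color, ∀ i, t ≤ dist (M.e i).1 (M.e i).2) := by
    intro t
    constructor
    · rintro ⟨μ, hμ, ht⟩
      have hch : ∀ i : Fin k, ∃ pq : Pt × Pt, pq.1 ∈ P ∧ pq.2 ∈ P ∧
          color pq.1 = (μ i).1 ∧ color pq.2 = (μ i).2 ∧
          dist pq.1 pq.2 = farDist P color (μ i).1 (μ i).2 := by
        intro i
        obtain ⟨p, hp, q, hq, h1, h2, h3⟩ :=
          farDist_attained P color hsurj (μ i).1 (μ i).2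
        exact ⟨(p, q), hp, hq, h1, h2, h3⟩
      choose e he1 he2 hc1 hc2 hd using hch
      have hfun : (fun x : Fin k × Bool =>
          color (if x.2 then (e x.1).1 else (e x.1).2)) =
          (fun x : Fin k × Bool => if x.2 then (μ x.1).1 else (μ x.1).2) := by
        funext x
        rcases x with ⟨i, b⟩
        cases b <;> simp [hc1, hc2]
      refine ⟨⟨e, he1, he2, ?_⟩, ?_⟩
      · rw [hfun]; exact hμ
      · intro i
        simp only
        rw [hd i]
        exact ht i
    · rintro ⟨M, hM⟩
      refine ⟨fun i => (color (M.e i).1, color (M.e i).2), ?_, ?_⟩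
      · have : (fun x : Fin k × Bool =>
            if x.2 then color (M.e x.1).1 else color (M.e x.1).2) =
            (fun x : Fin k × Bool =>
              color (if x.2 then (M.e x.1).1 else (M.e x.1).2)) := by
          funext x; rcases x with ⟨i, b⟩; cases b <;> simp
        unfold IsColorPM
        simp only
        rw [this]
        exact M.colorInj
      · intro i
        exact le_trans (hM i) (le_farDist P color (M.mem1 i) (M.mem2 i))
  refine ⟨hiff, ?_⟩
  -- a trivial color perfect matching
  have hμ₀ : ∃ μ : Fin k → Fin (2*k) × Fin (2*k), IsColorPM k μ ∧
      ∀ i, (0:ℝ) ≤ farDist P color (μ i).1 (μ i).2 := by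
    refine ⟨fun i => (⟨2*i.val, by have := i.isLt; omega⟩,
      ⟨2*i.val+1, by have := i.isLt; omega⟩), ?_, ?_⟩
    · rintro ⟨i, b⟩ ⟨j, c⟩ h
      simp only at h
      have h' := congrArg Fin.val h
      cases b <;> cases c <;> simp_all [Prod.ext_iff, Fin.ext_iff] <;> omega
    · intro i; exact farDist_nonneg P color hsurj _ _
  obtain ⟨M₀, _⟩ := (hiff 0).mp hμ₀
  -- notation
  set A := {r : ℝ | ∃ M : CSM k P color, r = M.minEdge hk} with hA
  set B := {t : ℝ | ∃ μ : Fin k → Fin (2*k) × Fin (2*k), IsColorPM k μ ∧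
      ∀ i, t ≤ farDist P color (μ i).1 (μ i).2} with hB
  have hBmem : ∀ t : ℝ, t ∈ B ↔ ∃ M : CSM k P color, t ≤ M.minEdge hk := by
    intro t
    rw [hB, Set.mem_setOf_eq, hiff t]
    constructor
    · rintro ⟨M, hM⟩
      exact ⟨M, Finset.le_inf' _ _ fun i _ => hM i⟩
    · rintro ⟨M, hM⟩
      exact ⟨M, fun i => le_trans hM (Finset.inf'_le _ (Finset.mem_univ i))⟩
  have hAne : A.Nonempty := ⟨M₀.minEdge hk, M₀, rfl⟩
  -- A is bounded above
  have hPne : P.Nonempty := by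
    obtain ⟨p, hp, _⟩ := hsurj ⟨0, by omega⟩
    exact ⟨p, hp⟩
  have hPP : (P ×ˢ P).Nonempty := hPne.product hPne
  set D : ℝ := (P ×ˢ P).sup' hPP (fun pq => dist pq.1 pq.2) with hD
  have hAbdd : BddAbove A := by
    refine ⟨D, ?_⟩
    rintro r ⟨M, rfl⟩
    refine le_trans (Finset.inf'_le _ (Finset.mem_univ ⟨0, hk⟩)) ?_
    exact Finset.le_sup' (fun pq : Pt × Pt => dist pq.1 pq.2)
      (Finset.mem_product.mpr ⟨M.mem1 _, M.mem2 _⟩)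
  have hBub : ∀ t ∈ B, t ≤ sSup A := by
    intro t ht
    obtain ⟨M, hM⟩ := (hBmem t).mp ht
    exact le_trans hM (le_csSup hAbdd ⟨M, rfl⟩)
  have hAB : A ⊆ B := by
    rintro r ⟨M, rfl⟩
    exact (hBmem _).mpr ⟨M, le_refl _⟩
  have hBne : B.Nonempty := hAne.mono hAB
  exact le_antisymm
    (csSup_le_csSup ⟨sSup A, hBub⟩ hAne hAB)
    (csSup_le hBne hBub)

end
end

section
/- Let P be a finite set of points in ℝ² colored with 2k colors, all used. Then the MinSum color-spanning matching value equals the minimum, over all perfect matchings μ of the 2k colors, of the sum over matched pairs {i,j} ∈ μ of the bichromatic closest-pair distance between colors i and j. -/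
open scoped Classical

noncomputable section

lemma closeDist_aux {k : ℕ} (P : Finset Pt) (color : Pt → Fin (2*k)) (c d : Fin (2*k))
    (hc : ∃ p ∈ P, color p = c) (hd : ∃ q ∈ P, color q = d) :
    ∃ p ∈ P, ∃ q ∈ P, color p = c ∧ color q = d ∧ dist p q = closeDist P color c d := by
  set S : Set ℝ := {r : ℝ | ∃ p ∈ P, ∃ q ∈ P, color p = c ∧ color q = d ∧ dist p q = r} with hS
  obtain ⟨p, hp, hpc⟩ := hc
  obtain ⟨q, hq, hqd⟩ := hd
  have hne : S.Nonempty := ⟨dist p q, p, hp, q, hq, hpc, hqd, rfl⟩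
  have hfin : S.Finite := by
    apply Set.Finite.subset (Set.Finite.image (fun pq : Pt × Pt => dist pq.1 pq.2)
      ((P ×ˢ P).finite_toSet))
    rintro r ⟨a, ha, b, hb, _, _, hr⟩
    exact ⟨(a, b), by simp [ha, hb], hr⟩
  exact hne.csInf_mem hfin

lemma closeDist_le_dist {k : ℕ} (P : Finset Pt) (color : Pt → Fin (2*k)) {p q : Pt}
    (hp : p ∈ P) (hq : q ∈ P) :
    closeDist P color (color p) (color q) ≤ dist p q := by
  apply csInf_le
  · exact ⟨0, by rintro r ⟨a, _, b, _, _, _, hr⟩; rw [← hr]; exact dist_nonneg⟩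
  · exact ⟨p, hp, q, hq, rfl, rfl, rfl⟩

/-- The MinSum color-spanning matching value equals the minimum, over perfect
matchings `μ` of the `2*k` colors, of the sum over matched color pairs of the
bichromatic closest-pair distance. -/
theorem minsum_eq_min_over_colorPM
    (k : ℕ) (P : Finset Pt) (color : Pt → Fin (2*k))
    (hsurj : ∀ c : Fin (2*k), ∃ p ∈ P, color p = c) :
    sInf {r : ℝ | ∃ M : CSM k P color, r = M.weight} =
    sInf {r : ℝ | ∃ μ : Fin k → Fin (2*k) × Fin (2*k), IsColorPM k μ ∧
        r = ∑ i, closeDist P color (μ i).1 (μ i).2} := by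
  set A := {r : ℝ | ∃ M : CSM k P color, r = M.weight} with hA
  set B := {r : ℝ | ∃ μ : Fin k → Fin (2*k) × Fin (2*k), IsColorPM k μ ∧
      r = ∑ i, closeDist P color (μ i).1 (μ i).2} with hB
  -- every μ-sum is achieved by a CSM
  have hBA : B ⊆ A := by
    rintro r ⟨μ, hμ, rfl⟩
    choose p hp q hq hpc hqd hd using fun i =>
      closeDist_aux P color (μ i).1 (μ i).2 (hsurj _) (hsurj _)
    refine ⟨⟨fun i => (p i, q i), hp, hq, ?_⟩, ?_⟩
    · have heq : (fun x : Fin k × Bool =>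
          color (if x.2 then ((fun i => (p i, q i)) x.1).1 else ((fun i => (p i, q i)) x.1).2)) =
          (fun x : Fin k × Bool => if x.2 then (μ x.1).1 else (μ x.1).2) := by
        funext x
        cases hx : x.2 <;> simp [hx, hpc, hqd]
      rw [heq]
      exact hμ
    · simp only [CSM.weight]
      exact Finset.sum_congr rfl fun i _ => (hd i).symm
  -- B is nonempty: the standard pairing (2i, 2i+1)
  have hBne : B.Nonempty := by
    refine ⟨_, fun i => (⟨2 * i.1, by omega⟩, ⟨2 * i.1 + 1, by omega⟩), ?_, rfl⟩
    intro x y h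
    simp only [Fin.mk.injEq] at h
    have hx2 := x.2; have hy2 := y.2
    rcases x with ⟨i, b⟩; rcases y with ⟨j, c⟩
    cases b <;> cases c <;> simp_all <;>
      [skip; omega; omega; skip] <;>
      exact Fin.ext (by omega)
  have hAne : A.Nonempty := hBne.mono hBA
  have hBddA : BddBelow A := by
    refine ⟨0, ?_⟩
    rintro r ⟨M, rfl⟩
    exact Finset.sum_nonneg fun i _ => dist_nonneg
  have hBddB : BddBelow B := hBddA.mono hBA
  refine le_antisymm (csInf_le_csInf hBddA hBne hBA) (le_csInf hAne ?_)
  rintro r ⟨M, rfl⟩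
  have hmem : (∑ i, closeDist P color (color (M.e i).1) (color (M.e i).2)) ∈ B := by
    refine ⟨fun i => (color (M.e i).1, color (M.e i).2), ?_, rfl⟩
    unfold IsColorPM
    have heq : (fun x : Fin k × Bool =>
        if x.2 then ((fun i => (color (M.e i).1, color (M.e i).2)) x.1).1
        else ((fun i => (color (M.e i).1, color (M.e i).2)) x.1).2) =
        fun x : Fin k × Bool => color (if x.2 then (M.e x.1).1 else (M.e x.1).2) := by
      funext x; cases hx : x.2 <;> simp [hx]
    rw [heq]
    exact M.colorInj
  refine le_trans (csInf_le hBddB hmem) ?_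
  exact Finset.sum_le_sum fun i _ => closeDist_le_dist P color (M.mem1 i) (M.mem2 i)

end
end
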